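/- arXiv:2001.10265 — 4 statements merged into one kernel-verified Lean document; each statement's English description precedes it below -/
import Mathlib

section
/- If n is odd and n ≡ 1 (mod 4), then U_n - 1 = U_{(n-1)/2} · V_{(n+1)/2}; if n ≡ 3 (mod 4), then U_n - 1 = U_{(n+1)/2} · V_{(n-1)/2}. -/
def U (r : ℕ) : ℕ → ℕ
  | 0 => 0
  | 1 => 1
  | n + 2 => r * U r (n + 1) + U r n

def V (r : ℕ) : ℕ → ℕ
  | 0 => 2
  | 1 => r
  | n + 2 => r * V r (n + 1) + V r n

lemma Urec (r n : ℕ) : U r (n + 2) = r * U r (n + 1) + U r n := rfl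
lemma Vrec (r n : ℕ) : V r (n + 2) = r * V r (n + 1) + V r n := rfl

lemma cassini (r n : ℕ) :
    (U r (n+1) : ℤ)^2 - (U r (n+2)) * (U r n) = (-1)^n := by
  induction n with
  | zero => simp [U]
  | succ k ih =>
    have h2 : (U r (k+3) : ℤ) = r * U r (k+2) + U r (k+1) := by
      rw [Urec]; push_cast; ring
    have h1 : (U r (k+2) : ℤ) = r * U r (k+1) + U r k := by
      rw [Urec]; push_cast; ring
    have : (U r (k+2) : ℤ)^2 - (U r (k+3)) * (U r (k+1)) =
        -((U r (k+1) : ℤ)^2 - (U r (k+2)) * (U r k)) := by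
      rw [h2]; nlinarith [h1]
    rw [this, ih]; ring

lemma vsum (r n : ℕ) : (V r (n+1) : ℤ) = U r (n+2) + U r n := by
  induction n using Nat.strong_induction_on with
  | _ n ih =>
    match n with
    | 0 => simp [U, V]
    | 1 => show (V r 2 : ℤ) = U r 3 + U r 1; simp [U, V]; push_cast; ring
    | (k+2) =>
      have i1 := ih k (by omega)
      have i2 := ih (k+1) (by omega)
      have e : k+1+1 = k+2 := by omega
      have e' : k+1+2 = k+3 := by omega
      rw [e, e'] at i2
      have hv : (V r (k+3) : ℤ) = r * V r (k+2) + V r (k+1) := by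
        rw [show k+3 = (k+1)+2 from by omega, Vrec]; push_cast; ring
      have hu4 : (U r (k+4) : ℤ) = r * U r (k+3) + U r (k+2) := by
        rw [show k+4 = (k+2)+2 from by omega, Urec]; push_cast; ring
      have hu3 : (U r (k+3) : ℤ) = r * U r (k+2) + U r (k+1) := by
        rw [show k+3 = (k+1)+2 from by omega, Urec]; push_cast; ring
      show (V r (k+3) : ℤ) = U r (k+4) + U r (k+2)
      have hu2 : (U r (k+2) : ℤ) = r * U r (k+1) + U r k := by
        rw [Urec]; push_cast; ring
      rw [hv, i1, i2, hu4, hu3]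
      linarith [hu2]

lemma dbl (r n : ℕ) :
    ((U r (2*n+1) : ℤ) = (U r (n+1))^2 + (U r n)^2) ∧
    ((U r (2*n+2) : ℤ) = (U r (n+1)) * ((U r (n+2)) + (U r n))) := by
  induction n with
  | zero => simp [U]
  | succ k ih =>
    obtain ⟨h1, h2⟩ := ih
    have e3 : 2*(k+1)+1 = (2*k+1) + 2 := by ring
    have e4 : 2*(k+1)+2 = (2*k+2) + 2 := by ring
    have hrec : (U r (k+3) : ℤ) = r * U r (k+2) + U r (k+1) := by
      rw [Urec]; push_cast; ring
    have hrec2 : (U r (k+2) : ℤ) = r * U r (k+1) + U r k := by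
      rw [Urec]; push_cast; ring
    constructor
    · rw [e3, Urec]
      push_cast
      rw [h1, h2]
      nlinarith [hrec2]
    · have hA : (U r (2*k+3) : ℤ) = r * U r (2*k+2) + U r (2*k+1) := by
        rw [show 2*k+3 = (2*k+1)+2 from by ring, Urec]; push_cast; ring
      rw [e4, Urec]
      push_cast
      rw [show 2*k+2+1 = 2*k+3 from by ring, hA, h1, h2,
        show k+1+1 = k+2 from rfl, show k+1+2 = k+3 from rfl, hrec, hrec2]
      ring

theorem stmt_9 (r : ℕ) (hr : 1 ≤ r) (n : ℕ) (hodd : Odd n) :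
    (n % 4 = 1 → (U r n : ℤ) - 1 = (U r ((n - 1) / 2) : ℤ) * (V r ((n + 1) / 2) : ℤ)) ∧
      (n % 4 = 3 → (U r n : ℤ) - 1 = (U r ((n + 1) / 2) : ℤ) * (V r ((n - 1) / 2) : ℤ)) := by
  constructor
  · intro h1
    obtain ⟨t, ht⟩ : ∃ t, n = 4*t+1 := ⟨n/4, by omega⟩
    subst ht
    have e1 : (4*t+1-1)/2 = 2*t := by omega
    have e2 : (4*t+1+1)/2 = 2*t+1 := by omega
    rw [e1, e2, vsum]
    have hd := (dbl r (2*t)).1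
    have hc := cassini r (2*t)
    have e3 : 2*(2*t)+1 = 4*t+1 := by ring
    have e4 : 2*t+1+1 = 2*t+2 := by ring
    rw [e3] at hd
    rw [hd]
    have hpow : ((-1:ℤ))^(2*t) = 1 := by rw [pow_mul]; norm_num
    rw [hpow] at hc
    nlinarith [hc]
  · intro h3
    obtain ⟨t, ht⟩ : ∃ t, n = 4*t+3 := ⟨n/4, by omega⟩
    subst ht
    have e1 : (4*t+3-1)/2 = 2*t+1 := by omega
    have e2 : (4*t+3+1)/2 = 2*t+2 := by omega
    rw [e1, e2]
    have hv : (V r (2*t+1) : ℤ) = U r (2*t+2) + U r (2*t) := vsum r (2*t)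
    rw [hv]
    have hd := (dbl r (2*t+1)).1
    have hc := cassini r (2*t)
    have e3 : 2*(2*t+1)+1 = 4*t+3 := by ring
    have e4 : 2*t+1+1 = 2*t+2 := by ring
    rw [e3, e4] at hd
    rw [hd]
    have hpow : ((-1:ℤ))^(2*t) = 1 := by rw [pow_mul]; norm_num
    rw [hpow] at hc
    nlinarith [hc]
end

section
/- If n ≥ 2, x ≥ 3, and U_n^x + U_{n+1}^x = U_m for positive integers m, then (n-1)x + 1 < m < (n+1)x + 2. -/
lemma U_mono (r : ℕ) (hr : 1 ≤ r) : Monotone (U r) := by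
  apply monotone_nat_of_le_succ
  intro k
  cases k with
  | zero => simp [U]
  | succ k =>
    show U r (k+1) ≤ r * U r (k+1) + U r k
    calc U r (k+1) = 1 * U r (k+1) := (one_mul _).symm
    _ ≤ r * U r (k+1) := Nat.mul_le_mul_right _ hr
    _ ≤ r * U r (k+1) + U r k := Nat.le_add_right _ _

lemma U_pos (r : ℕ) (hr : 1 ≤ r) (k : ℕ) (hk : 1 ≤ k) : 1 ≤ U r k := by
  have := U_mono r hr hk
  simpa [U] using this

lemma U_add (r a : ℕ) : ∀ b, U r (a + b + 1) = U r (a+1) * U r (b+1) + U r a * U r b := by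
  intro b
  have key : ∀ b, (U r (a + b + 1) = U r (a+1) * U r (b+1) + U r a * U r b) ∧
      (U r (a + b + 2) = U r (a+1) * U r (b+2) + U r a * U r (b+1)) := by
    intro b
    induction b with
    | zero =>
      constructor
      · simp [U]
      · show U r (a + 2) = U r (a+1) * U r 2 + U r a * U r 1
        have h2 : U r 2 = r := by simp [U]
        have h1 : U r 1 = 1 := rfl
        show r * U r (a+1) + U r a = _
        rw [h1, h2]; ring
    | succ k ih =>
      obtain ⟨h1, h2⟩ := ih
      refine ⟨by simpa [Nat.add_assoc, Nat.add_comm, Nat.add_left_comm] using h2, ?_⟩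
      have e3 : a + (k+1) + 2 = (a + k + 1) + 2 := by ring
      have e2 : a + (k+1) + 1 = a + k + 2 := by ring
      rw [e3]
      show r * U r (a + k + 2) + U r (a + k + 1) = _
      rw [h1, h2]
      have hk3 : U r (k + 3) = r * U r (k+2) + U r (k+1) := rfl
      have hk2 : U r (k + 1 + 2) = r * U r (k+2) + U r (k+1) := rfl
      have hk1 : U r (k + 1 + 1) = U r (k + 2) := rfl
      have hk0 : U r (k+2) = r * U r (k+1) + U r k := rfl
      rw [hk2, hk1, hk0]
      ring
  exact (key b).1

lemma U_add_ge (r a b : ℕ) : U r (a+1) * U r (b+1) ≤ U r (a + b + 1) := by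
  rw [U_add]; exact Nat.le_add_right _ _

lemma U_add_le (r : ℕ) (hr : 1 ≤ r) (a b : ℕ) :
    U r (a + b + 1) ≤ U r (a+1) * U r (b+2) := by
  rw [U_add]
  have hb2 : U r (b+1) + U r b ≤ U r (b+2) := by
    show _ ≤ r * U r (b+1) + U r b
    have : U r (b+1) ≤ r * U r (b+1) := by
      calc U r (b+1) = 1 * U r (b+1) := (one_mul _).symm
      _ ≤ r * U r (b+1) := Nat.mul_le_mul_right _ hr
    omega
  calc U r (a+1) * U r (b+1) + U r a * U r b
      ≤ U r (a+1) * U r (b+1) + U r (a+1) * U r b :=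
        Nat.add_le_add_left (Nat.mul_le_mul_right _ (U_mono r hr (Nat.le_succ a))) _
    _ = U r (a+1) * (U r (b+1) + U r b) := by ring
    _ ≤ U r (a+1) * U r (b+2) := Nat.mul_le_mul_left _ hb2

lemma U_pow_le (r : ℕ) (hr : 1 ≤ r) (s : ℕ) : ∀ k, U r (k * s + 1) ≤ U r (s + 2) ^ k := by
  intro k
  induction k with
  | zero => simp [U]
  | succ k ih =>
    have e : (k+1) * s + 1 = k * s + s + 1 := by ring
    rw [e]
    calc U r (k * s + s + 1) ≤ U r (k * s + 1) * U r (s + 2) := U_add_le r hr _ _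
      _ ≤ U r (s+2) ^ k * U r (s + 2) := Nat.mul_le_mul_right _ ih
      _ = U r (s+2) ^ (k+1) := (pow_succ _ _).symm

lemma U_pow_ge (r : ℕ) (hr : 1 ≤ r) (s : ℕ) : ∀ k, U r (s+1) ^ k ≤ U r (k * (s+1) + 1) := by
  intro k
  induction k with
  | zero => simp [U]
  | succ k ih =>
    calc U r (s+1) ^ (k+1) = U r (s+1) ^ k * U r (s+1) := pow_succ _ _
      _ ≤ U r (k * (s+1) + 1) * U r (s+1) := Nat.mul_le_mul_right _ ih
      _ ≤ U r (k * (s+1) + s + 1) := U_add_ge r _ _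
      _ ≤ U r ((k+1) * (s+1) + 1) := U_mono r hr (by ring_nf; omega)

theorem stmt_12 (r : ℕ) (hr : 1 ≤ r) (n x m : ℕ) (hn : 2 ≤ n) (hx : 3 ≤ x) (hm : 1 ≤ m)
    (h : U r n ^ x + U r (n + 1) ^ x = U r m) :
    (n - 1) * x + 1 < m ∧ m < (n + 1) * x + 2 := by
  have hA : 1 ≤ U r n := U_pos r hr n (by omega)
  have hB : 1 ≤ U r (n+1) := U_pos r hr (n+1) (by omega)
  have mono := U_mono r hr
  -- lower bound
  have hlow : U r ((n-1) * x + 1) < U r m := by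
    have h1 : U r ((n-1) * x + 1) ≤ U r ((n-1) + 2) ^ x := by
      rw [mul_comm]; exact U_pow_le r hr (n-1) x
    have he : (n-1) + 2 = n + 1 := by omega
    rw [he] at h1
    have h2 : U r (n+1) ^ x < U r m := by
      rw [← h]
      have : 1 ≤ U r n ^ x := Nat.one_le_pow _ _ hA
      omega
    omega
  have hlow' : (n-1) * x + 1 < m := by
    by_contra hc
    push_neg at hc
    exact absurd (mono hc) (by omega)
  refine ⟨hlow', ?_⟩
  -- upper bound
  have hup : U r m < U r ((n+1) * x + 2) := by
    obtain ⟨q, rfl⟩ : ∃ q, x = q + 1 := ⟨x - 1, by omega⟩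
    have hBq : 1 ≤ U r (n+1) ^ q := Nat.one_le_pow _ _ hB
    have step1 : U r m ≤ U r (n+1) ^ q * U r (n+2) := by
      rw [← h]
      have hAB : U r n ^ (q+1) ≤ U r (n+1) ^ q * U r n := by
        rw [pow_succ]
        exact Nat.mul_le_mul_right _ (Nat.pow_le_pow_left (mono (Nat.le_succ n)) q)
      have hBB : U r (n+1) ^ (q+1) = U r (n+1) ^ q * U r (n+1) := pow_succ _ _
      have hsum : U r n + U r (n+1) ≤ U r (n+2) := by
        show _ ≤ r * U r (n+1) + U r n
        have : U r (n+1) ≤ r * U r (n+1) := by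
          calc U r (n+1) = 1 * U r (n+1) := (one_mul _).symm
          _ ≤ r * U r (n+1) := Nat.mul_le_mul_right _ hr
        omega
      calc U r n ^ (q+1) + U r (n+1) ^ (q+1)
          ≤ U r (n+1) ^ q * U r n + U r (n+1) ^ q * U r (n+1) := by rw [hBB]; omega
        _ = U r (n+1) ^ q * (U r n + U r (n+1)) := by ring
        _ ≤ U r (n+1) ^ q * U r (n+2) := Nat.mul_le_mul_left _ hsum
    have step2 : U r (n+2) < U r (n+3) := by
      show _ < r * U r (n+2) + U r (n+1)
      have : U r (n+2) ≤ r * U r (n+2) := by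
        calc U r (n+2) = 1 * U r (n+2) := (one_mul _).symm
        _ ≤ r * U r (n+2) := Nat.mul_le_mul_right _ hr
      omega
    have step3 : U r (n+1) ^ q * U r (n+3) ≤ U r ((n+1) * (q+1) + 2) := by
      calc U r (n+1) ^ q * U r (n+3)
          ≤ U r (q * (n+1) + 1) * U r (n+3) :=
            Nat.mul_le_mul_right _ (U_pow_ge r hr n q)
        _ ≤ U r (q * (n+1) + (n+2) + 1) := U_add_ge r _ _
        _ = U r ((n+1) * (q+1) + 2) := by ring_nf
    calc U r m ≤ U r (n+1) ^ q * U r (n+2) := step1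
      _ < U r (n+1) ^ q * U r (n+3) := by
          exact mul_lt_mul_of_pos_left step2 (by omega)
      _ ≤ U r ((n+1) * (q+1) + 2) := step3
  by_contra hc
  push_neg at hc
  exact absurd (mono hc) (by omega)
end

section
/- For any real r ≥ 3, |log α - log r - 1/r²| < 3.64/r⁴, where α = (r + √(r²+4))/2. -/
theorem stmt_18 (r : ℝ) (hr : 3 ≤ r) :
    |Real.log ((r + Real.sqrt (r ^ 2 + 4)) / 2) - Real.log r - 1 / r ^ 2| < 3.64 / r ^ 4 := by
  have hr0 : 0 < r := by linarith
  set s := Real.sqrt (r ^ 2 + 4) with hs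
  have hs2 : s ^ 2 = r ^ 2 + 4 := Real.sq_sqrt (by positivity)
  have hs0 : 0 < s := Real.sqrt_pos.2 (by positivity)
  have hsr : r < s := by nlinarith
  have hc1 : r * s ≤ r ^ 2 + 2 := by
    nlinarith [hs2, mul_pos hr0 hs0, sq_nonneg (r * s - r ^ 2 - 2)]
  have hc2 : r ^ 4 + 2 * r ^ 2 - 2 ≤ r ^ 3 * s := by
    have hq : (r ^ 4 + 2 * r ^ 2 - 2) ^ 2 ≤ (r ^ 3 * s) ^ 2 := by
      have h6 : (r ^ 3 * s) ^ 2 = r ^ 6 * (r ^ 2 + 4) := by rw [mul_pow, hs2]; ring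
      rw [h6]; nlinarith
    nlinarith [hq, mul_pos (pow_pos hr0 3) hs0, sq_nonneg (r ^ 3 * s - (r ^ 4 + 2 * r ^ 2 - 2)),
      sq_nonneg (r ^ 3 * s + (r ^ 4 + 2 * r ^ 2 - 2))]
  set A : ℝ := (r + s) / 2 / r with hA
  set x : ℝ := 1 / r ^ 2 with hxdef
  have hx0 : 0 < x := by positivity
  have hx9 : x ≤ 1 / 9 := by
    rw [hxdef, div_le_div_iff₀ (by positivity) (by norm_num)]
    nlinarith
  have hxx4 : x * x = 1 / r ^ 4 := by
    rw [hxdef, div_mul_div_comm, one_mul]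
    ring
  have hApos : 0 < A := by positivity
  have hA1 : 1 < A := by
    rw [hA, div_div, lt_div_iff₀ (by positivity)]
    nlinarith
  have hd : A - 1 = (s - r) / (2 * r) := by
    rw [hA, div_div]
    field_simp; ring
  have hAle : A - 1 ≤ x := by
    rw [hd, hxdef, div_le_div_iff₀ (by positivity) (by positivity)]
    nlinarith [hc1]
  have hAge : x - x * x ≤ A - 1 := by
    rw [hd, le_div_iff₀ (by positivity)]
    have hx4 : x * r ^ 4 = r ^ 2 := by rw [hxdef]; field_simp
    have hx44 : x * x * r ^ 4 = 1 := by rw [hxdef]; field_simp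
    nlinarith [hc2, hx4, hx44, pow_pos hr0 3, pow_pos hr0 4]
  -- log inequalities
  have hlog_u : Real.log A < A - 1 := Real.log_lt_sub_one_of_pos hApos (by linarith)
  have hlog_l : 1 - 1 / A ≤ Real.log A := by
    have h := Real.log_le_sub_one_of_pos (x := 1 / A) (by positivity)
    rw [one_div, Real.log_inv] at h
    rw [one_div]
    linarith
  have hkey : x - 2 * (x * x) ≤ 1 - 1 / A := by
    have h1A : 1 / A ≤ 1 - x + 2 * (x * x) := by
      rw [div_le_iff₀ hApos]
      have hfac : (0:ℝ) ≤ 1 - x + 2 * (x * x) := by nlinarith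
      nlinarith [mul_nonneg hfac (show (0:ℝ) ≤ A - (1 + x - x * x) by linarith),
        mul_nonneg (mul_nonneg hx0.le hx0.le) hx0.le]
    linarith
  -- assemble
  have hlogA : Real.log A = Real.log ((r + s) / 2) - Real.log r := by
    rw [hA]
    exact Real.log_div (by positivity) hr0.ne'
  rw [show Real.log ((r + s) / 2) = Real.log A + Real.log r from by rw [hlogA]; ring,
    show Real.log A + Real.log r - Real.log r - x = Real.log A - x from by ring]
  have hX4 : 3.64 / r ^ 4 = 3.64 * (x * x) := by rw [hxx4]; ring
  rw [hX4, abs_lt]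
  have hxx : 0 < x * x := mul_pos hx0 hx0
  constructor
  · linarith
  · linarith
end

section
/- If r = 4 then U_n³ + U_{n+1}³ < U_{3n+1} for all n ≥ 1. -/
lemma Uadd (r m : ℕ) : ∀ n, U r (m + n + 1) = U r (m + 1) * U r (n + 1) + U r m * U r n
    ∧ U r (m + n + 2) = U r (m + 1) * U r (n + 2) + U r m * U r (n + 1) := by
  intro n
  induction n with
  | zero =>
    constructor
    · simp [U]
    · show U r (m + 2) = _
      simp [U]; ring
  | succ k ih =>
    obtain ⟨h1, h2⟩ := ih
    constructor
    · have : m + (k + 1) + 1 = m + k + 2 := by ring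
      rw [this, h2]
    · have : m + (k + 1) + 2 = (m + k + 1) + 2 := by ring
      rw [this]
      show r * U r (m + k + 2) + U r (m + k + 1) = _
      rw [h1, h2]
      show _ = U r (m+1) * (r * U r (k+2) + U r (k+1)) + U r m * (r * U r (k+1) + U r k)
      ring

lemma Upos (k : ℕ) : 0 < U 4 (k + 1) := by
  induction k with
  | zero => simp [U]
  | succ m ih =>
    show 0 < 4 * U 4 (m + 1) + U 4 m
    omega

theorem stmt_19 (n : ℕ) (hn : 1 ≤ n) :
    U 4 n ^ 3 + U 4 (n + 1) ^ 3 < U 4 (3 * n + 1) := by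
  obtain ⟨k, rfl⟩ : ∃ k, n = k + 1 := ⟨n - 1, by omega⟩
  have h1 : U 4 (3 * (k + 1) + 1) = U 4 (2*k+3) * U 4 (k + 2) + U 4 (2*k+2) * U 4 (k+1) := by
    have := (Uadd 4 (2*k+2) (k+1)).1
    have e : 2*k+2 + (k+1) + 1 = 3*(k+1)+1 := by ring
    rw [e] at this
    rw [this]
  have h2 : U 4 (2*k+3) = U 4 (k+2) * U 4 (k+2) + U 4 (k+1) * U 4 (k+1) := by
    have := (Uadd 4 (k+1) (k+1)).1
    have e : k+1 + (k+1) + 1 = 2*k+3 := by ring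
    rw [e] at this; exact this
  have h3 : U 4 (2*k+2) = U 4 (k+2) * U 4 (k+1) + U 4 (k+1) * U 4 k := by
    have := (Uadd 4 (k+1) k).1
    have e : k+1 + k + 1 = 2*k+2 := by ring
    rw [e] at this; exact this
  have hrec : U 4 (k+2) = 4 * U 4 (k+1) + U 4 k := rfl
  have hp : 0 < U 4 (k+1) := Upos k
  rw [h1, h2, h3]
  nlinarith [sq_nonneg (U 4 (k+1)), Nat.zero_le (U 4 k), sq_nonneg (U 4 (k+2))]
end
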